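/- Suppose p : ℝ → ℝ² is twice differentiable, p_ref : ℝ → ℝ² is twice differentiable, h(t) = (1/2)(w² − ‖p(t) − p_ref(t)‖²) with w > 0, and define ψ¹ = h' + α₀h with α₀ > 0. If h(0) ≥ 0, ψ¹(0) ≥ 0, and (ψ¹)' + α₁ψ¹ ≥ 0 on [0, ∞) for some α₁ > 0, then ‖p(t) − p_ref(t)‖ ≤ w for all t ≥ 0. -/

import Mathlib

open Real

lemma gronwall_nonneg (f : ℝ → ℝ) (α : ℝ) (hf : Differentiable ℝ f)
    (h0 : 0 ≤ f 0) (hineq : ∀ t ≥ (0:ℝ), 0 ≤ deriv f t + α * f t) :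
    ∀ t ≥ (0:ℝ), 0 ≤ f t := by
  set g : ℝ → ℝ := fun t => Real.exp (α * t) * f t with hg
  have hgd : Differentiable ℝ g := by
    exact Differentiable.mul (by fun_prop) hf
  have hderiv : ∀ t, deriv g t = Real.exp (α * t) * (deriv f t + α * f t) := by
    intro t
    have h1 : HasDerivAt (fun t => Real.exp (α * t)) (α * Real.exp (α * t)) t := by
      have := (Real.hasDerivAt_exp (α * t)).comp t ((hasDerivAt_id t).const_mul α)
      simpa [mul_comm, Function.comp_def] using this
    have h2 := (h1.mul (hf t).hasDerivAt)
    rw [show g = (fun t => Real.exp (α * t)) * f from rfl, h2.deriv]; ring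
  have hmono : MonotoneOn g (Set.Ici (0:ℝ)) := by
    apply monotoneOn_of_deriv_nonneg (convex_Ici 0) hgd.continuous.continuousOn
      (hgd.differentiableOn.mono interior_subset)
    intro t ht
    rw [interior_Ici] at ht
    rw [hderiv]
    exact mul_nonneg (Real.exp_pos _).le (hineq t ht.le)
  intro t ht
  have := hmono (Set.self_mem_Ici) (Set.mem_Ici.mpr ht) ht
  have hg0 : g 0 = f 0 := by simp [hg]
  have : (0:ℝ) ≤ g t := by rw [hg0] at this; linarith
  have hpos := Real.exp_pos (α * t)
  have hgt : g t = Real.exp (α * t) * f t := rfl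
  rw [hgt] at this
  nlinarith [this]

/-- Safe reference tracking via a second-order HOCBF: the vehicle stays within
distance `w` of the reference trajectory for all `t ≥ 0`. -/
theorem safe_reference_tracking (p pref : ℝ → EuclideanSpace ℝ (Fin 2))
    (w α0 α1 : ℝ) (hw : 0 < w) (hα0 : 0 < α0) (hα1 : 0 < α1)
    (hp : Differentiable ℝ p) (hp2 : Differentiable ℝ (deriv p))
    (hr : Differentiable ℝ pref) (hr2 : Differentiable ℝ (deriv pref))
    (h : ℝ → ℝ) (hh : h = fun t => (1 / 2 : ℝ) * (w ^ 2 - ‖p t - pref t‖ ^ 2))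
    (ψ1 : ℝ → ℝ) (hψ1 : ψ1 = fun t => deriv h t + α0 * h t)
    (h0 : 0 ≤ h 0) (h1 : 0 ≤ ψ1 0)
    (hineq : ∀ t ≥ (0 : ℝ), deriv ψ1 t + α1 * ψ1 t ≥ 0) :
    ∀ t ≥ (0 : ℝ), ‖p t - pref t‖ ≤ w := by
  set q : ℝ → EuclideanSpace ℝ (Fin 2) := fun t => p t - pref t with hqdef
  set q' : ℝ → EuclideanSpace ℝ (Fin 2) := fun t => deriv p t - deriv pref t with hq'def
  have hq : Differentiable ℝ q := hp.sub hr
  have hq' : Differentiable ℝ q' := hp2.sub hr2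
  have hqderiv : ∀ t, HasDerivAt q (q' t) t :=
    fun t => ((hp t).hasDerivAt.sub (hr t).hasDerivAt)
  have hhda : ∀ t, HasDerivAt h (-(inner ℝ (q t) (q' t) : ℝ)) t := by
    intro t
    have hin : HasDerivAt (fun s => (inner ℝ (q s) (q s) : ℝ))
        ((inner ℝ (q t) (q' t) : ℝ) + (inner ℝ (q' t) (q t) : ℝ)) t :=
      (hqderiv t).inner ℝ (hqderiv t)
    have : HasDerivAt h ((1/2 : ℝ) * (0 - ((inner ℝ (q t) (q' t) : ℝ) + (inner ℝ (q' t) (q t) : ℝ)))) t := by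
      rw [hh]
      have heq : (fun s => (1 / 2 : ℝ) * (w ^ 2 - ‖p s - pref s‖ ^ 2))
          = fun s => (1/2 : ℝ) * (w^2 - (inner ℝ (q s) (q s) : ℝ)) := by
        funext s
        rw [real_inner_self_eq_norm_sq]
      rw [heq]
      exact ((hasDerivAt_const t (w^2)).sub hin).const_mul _
    convert this using 1
    rw [real_inner_comm (q' t) (q t)]
    ring
  have hderivh : deriv h = fun t => -(inner ℝ (q t) (q' t) : ℝ) := by
    funext t; exact (hhda t).deriv
  have hhdiff : Differentiable ℝ h := fun t => (hhda t).differentiableAt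
  have hψdiff : Differentiable ℝ ψ1 := by
    rw [hψ1, hderivh]
    exact ((hq.inner ℝ hq').neg).add (hhdiff.const_mul α0)
  -- ψ1 ≥ 0 on [0,∞)
  have hψnn : ∀ t ≥ (0:ℝ), 0 ≤ ψ1 t := by
    apply gronwall_nonneg ψ1 α1 hψdiff h1
    intro t ht; linarith [hineq t ht]
  have hhnn : ∀ t ≥ (0:ℝ), 0 ≤ h t := by
    apply gronwall_nonneg h α0 hhdiff h0
    intro t ht
    have := hψnn t ht
    rw [hψ1] at this
    simpa using this
  intro t ht
  have := hhnn t ht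
  rw [hh] at this
  simp only at this
  have hnn : 0 ≤ ‖p t - pref t‖ := norm_nonneg _
  nlinarith
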